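/- Let 0 < ε ≤ 1/8, let the input be ε-well-separated, and let π be an ε-well-aligned perfect matching. Then w_close + w_med ≤ (2/ε + 3) · w_opt + (4ε/(1 − 2ε)) · w_far. -/

import Mathlib

open MeasureTheory Finset

noncomputable def eind (a b : ℝ) : ℝ → ℝ := (Set.Ioc a b).indicator (fun _ => (1:ℝ))

lemma eind_def (a b x : ℝ) : eind a b x = if a < x ∧ x ≤ b then 1 else 0 := by
  simp [eind, Set.indicator, Set.mem_Ioc]

lemma eind_nonneg (a b x : ℝ) : 0 ≤ eind a b x := by
  rw [eind_def]; split <;> norm_num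

lemma eind_le_one (a b x : ℝ) : eind a b x ≤ 1 := by
  rw [eind_def]; split <;> norm_num

lemma eind_integrable (a b : ℝ) : Integrable (eind a b) := by
  unfold eind
  rw [integrable_indicator_iff measurableSet_Ioc]
  refine integrableOn_const ?_
  rw [Real.volume_Ioc]; exact ENNReal.ofReal_ne_top

lemma eind_integral (a b : ℝ) (h : a ≤ b) : ∫ x, eind a b x = b - a := by
  unfold eind
  rw [MeasureTheory.integral_indicator measurableSet_Ioc, MeasureTheory.setIntegral_const,
    Real.volume_real_Ioc_of_le h]
  simp

lemma eind_sub (a b x : ℝ) :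
    eind a b x - eind b a x = (if a < x then 1 else 0) - (if b < x then 1 else 0) := by
  rw [eind_def, eind_def]
  by_cases h1 : a < x <;> by_cases h2 : b < x <;>
    simp [h1, h2, not_le.mpr, not_lt.mp, le_of_not_gt]

lemma eind_abs_sub (a b x : ℝ) :
    |eind a b x - eind b a x| ≤ eind (min a b) (max a b) x := by
  rcases le_total a b with h | h
  · rw [min_eq_left h, max_eq_right h]
    have : eind b a x = 0 := by
      rw [eind_def, if_neg]; rintro ⟨h1, h2⟩; exact absurd (h2.trans h) (not_le.mpr h1)
    rw [this, sub_zero, abs_of_nonneg (eind_nonneg _ _ _)]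
  · rw [min_eq_right h, max_eq_left h]
    have : eind a b x = 0 := by
      rw [eind_def, if_neg]; rintro ⟨h1, h2⟩; exact absurd (h2.trans h) (not_le.mpr h1)
    rw [this, zero_sub, abs_neg, abs_of_nonneg (eind_nonneg _ _ _)]

/-- `x` lies in the interval `I_L' = [−εΔ, εΔ]`. -/
abbrev inIL (ε Δ x : ℝ) : Prop := -(ε * Δ) ≤ x ∧ x ≤ ε * Δ

/-- `x` lies in the interval `I_R' = [(1−ε)Δ, (1+ε)Δ]`. -/
abbrev inIR (ε Δ x : ℝ) : Prop := (1 - ε) * Δ ≤ x ∧ x ≤ (1 + ε) * Δ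

set_option maxHeartbeats 2000000 in
/-- For an `ε`-well-separated input (with `0 < ε ≤ 1/8`) and an
`ε`-well-aligned perfect matching `π`,
`w_close + w_med ≤ (2/ε + 3)·w_opt + (4ε/(1−2ε))·w_far`. -/
theorem well_aligned_close_med_bound (n : ℕ) (hn : 1 ≤ n) (s r : Fin n → ℝ)
    (Δ ε : ℝ) (hΔ : 0 < Δ) (hε0 : 0 < ε) (hε : ε ≤ 1 / 8)
    (hsep_s : ∀ i, (-(ε * Δ) ≤ s i ∧ s i ≤ 0) ∨ (Δ ≤ s i ∧ s i ≤ (1 + ε) * Δ))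
    (hsep_r : ∀ i, -(ε * Δ) ≤ r i ∧ r i ≤ (1 + ε) * Δ)
    (π : Equiv.Perm (Fin n))
    (haligned : ∀ i,
      (inIR ε Δ (s (π i)) ∧ inIR ε Δ (r i) → r i ≤ s (π i)) ∧
      (inIL ε Δ (s (π i)) ∧ inIL ε Δ (r i) → s (π i) ≤ r i)) :
    (∑ i ∈ Finset.univ.filter (fun i =>
        (inIL ε Δ (s (π i)) ∧ inIL ε Δ (r i)) ∨
        (inIR ε Δ (s (π i)) ∧ inIR ε Δ (r i))), |s (π i) - r i|) +
      (∑ i ∈ Finset.univ.filter (fun i =>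
        ε * Δ ≤ r i ∧ r i ≤ (1 - ε) * Δ), |s (π i) - r i|) ≤
    (2 / ε + 3) * (⨅ σ : Equiv.Perm (Fin n), ∑ i, |s (σ i) - r i|) +
      (4 * ε / (1 - 2 * ε)) *
        ∑ i ∈ Finset.univ.filter (fun i =>
          (inIL ε Δ (s (π i)) ∧ inIR ε Δ (r i)) ∨
          (inIR ε Δ (s (π i)) ∧ inIL ε Δ (r i))), |s (π i) - r i| := by
  classical
  have hεΔ : 0 < ε * Δ := mul_pos hε0 hΔ
  have hgap : ε * Δ < (1 - ε) * Δ := by nlinarith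
  set wopt := ⨅ σ : Equiv.Perm (Fin n), ∑ i, |s (σ i) - r i| with hwopt
  set CL := Finset.univ.filter (fun i => inIL ε Δ (s (π i)) ∧ inIL ε Δ (r i)) with hCL
  set CR := Finset.univ.filter (fun i => inIR ε Δ (s (π i)) ∧ inIR ε Δ (r i)) with hCR
  set Far := Finset.univ.filter (fun i =>
      (inIL ε Δ (s (π i)) ∧ inIR ε Δ (r i)) ∨
      (inIR ε Δ (s (π i)) ∧ inIL ε Δ (r i))) with hFarDef
  set Med := Finset.univ.filter (fun i => ε * Δ ≤ r i ∧ r i ≤ (1 - ε) * Δ) with hMedDef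
  -- split the close sum
  have hsplit : (Finset.univ.filter (fun i =>
        (inIL ε Δ (s (π i)) ∧ inIL ε Δ (r i)) ∨
        (inIR ε Δ (s (π i)) ∧ inIR ε Δ (r i)))) = CL ∪ CR := by
    rw [hCL, hCR, ← Finset.filter_or]
  have hdisj : Disjoint CL CR := by
    rw [Finset.disjoint_left]
    intro i hiL hiR
    rw [hCL, Finset.mem_filter] at hiL
    rw [hCR, Finset.mem_filter] at hiR
    have h1 := hiL.2.2.2
    have h2 := hiR.2.2.1
    linarith
  rw [hsplit, Finset.sum_union hdisj]
  -- the functions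
  set u : ℝ → ℝ := fun x => ∑ i ∈ CR, eind (r i) (s (π i)) x with hu
  set v : ℝ → ℝ := fun x => ∑ i ∈ CL, eind (s (π i)) (r i) x with hv
  set Up : ℝ → ℝ := fun x => ∑ i, eind (r i) (s (π i)) x with hUp
  set Dn : ℝ → ℝ := fun x => ∑ i, eind (s (π i)) (r i) x with hDn
  set Fr : ℝ := ∑ _i ∈ Far, (1:ℝ) with hFr
  set χ : ℝ → ℝ := fun x => eind (-(ε*Δ)) (ε*Δ) x + eind ((1-ε)*Δ) ((1+ε)*Δ) x with hχ
  have hFr0 : 0 ≤ Fr := Finset.sum_nonneg (fun _ _ => zero_le_one)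
  -- pointwise inequality
  have hkey : ∀ x, u x + v x ≤ |Up x - Dn x| + Fr * χ x := by
    intro x
    have hu_le : u x ≤ Up x :=
      Finset.sum_le_sum_of_subset_of_nonneg (Finset.filter_subset _ _)
        (fun i _ _ => eind_nonneg _ _ _)
    have hv_le : v x ≤ Dn x :=
      Finset.sum_le_sum_of_subset_of_nonneg (Finset.filter_subset _ _)
        (fun i _ _ => eind_nonneg _ _ _)
    have hu0 : ¬((1-ε)*Δ < x ∧ x ≤ (1+ε)*Δ) → u x = 0 := by
      intro h
      refine Finset.sum_eq_zero (fun i hi => ?_)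
      rw [hCR, Finset.mem_filter] at hi
      rw [eind_def, if_neg]
      rintro ⟨h1, h2⟩
      exact h ⟨lt_of_le_of_lt hi.2.2.1 h1, h2.trans hi.2.1.2⟩
    have hv0 : ¬(-(ε*Δ) < x ∧ x ≤ ε*Δ) → v x = 0 := by
      intro h
      refine Finset.sum_eq_zero (fun i hi => ?_)
      rw [hCL, Finset.mem_filter] at hi
      rw [eind_def, if_neg]
      rintro ⟨h1, h2⟩
      exact h ⟨lt_of_le_of_lt hi.2.1.1 h1, h2.trans hi.2.2.2⟩
    have hχ0 : 0 ≤ χ x := add_nonneg (eind_nonneg _ _ _) (eind_nonneg _ _ _)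
    by_cases hR : (1-ε)*Δ < x ∧ x ≤ (1+ε)*Δ
    · -- right region
      have hv0' : v x = 0 := hv0 (by rintro ⟨_, h2⟩; linarith [hR.1])
      have hDnF : Dn x ≤ Fr := by
        rw [hDn, hFr, Finset.sum_filter]
        refine Finset.sum_le_sum (fun i _ => ?_)
        rw [eind_def]
        split_ifs with h1 h2
        · norm_num
        · exfalso
          obtain ⟨ha, hb⟩ := h1
          have hrIR : inIR ε Δ (r i) := ⟨le_of_lt (lt_of_lt_of_le hR.1 hb), (hsep_r i).2⟩
          rcases hsep_s (π i) with hleft | hright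
          · exact h2 (Or.inl ⟨⟨hleft.1, by linarith⟩, hrIR⟩)
          · have hsIR : inIR ε Δ (s (π i)) := ⟨by nlinarith [hright.1], hright.2⟩
            have := (haligned i).1 ⟨hsIR, hrIR⟩
            linarith
        · norm_num
        · norm_num
      have hχ1 : 1 ≤ χ x := by
        have : eind ((1-ε)*Δ) ((1+ε)*Δ) x = 1 := by rw [eind_def, if_pos hR]
        rw [hχ]; dsimp only; rw [this]; linarith [eind_nonneg (-(ε*Δ)) (ε*Δ) x]
      have h1 : Up x ≤ |Up x - Dn x| + Dn x := by
        have := le_abs_self (Up x - Dn x); linarith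
      have h2 : Fr * 1 ≤ Fr * χ x := mul_le_mul_of_nonneg_left hχ1 hFr0
      linarith
    · by_cases hL : -(ε*Δ) < x ∧ x ≤ ε*Δ
      · -- left region
        have hu0' : u x = 0 := hu0 hR
        have hUpF : Up x ≤ Fr := by
          rw [hUp, hFr, Finset.sum_filter]
          refine Finset.sum_le_sum (fun i _ => ?_)
          rw [eind_def]
          split_ifs with h1 h2
          · norm_num
          · exfalso
            obtain ⟨ha, hb⟩ := h1
            have hrIL : inIL ε Δ (r i) := ⟨(hsep_r i).1, le_of_lt (lt_of_lt_of_le ha hL.2)⟩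
            rcases hsep_s (π i) with hleft | hright
            · have hsIL : inIL ε Δ (s (π i)) := ⟨hleft.1, by linarith⟩
              have := (haligned i).2 ⟨hsIL, hrIL⟩
              linarith
            · have hsIR : inIR ε Δ (s (π i)) := ⟨by nlinarith [hright.1], hright.2⟩
              exact h2 (Or.inr ⟨hsIR, hrIL⟩)
          · norm_num
          · norm_num
        have hχ1 : 1 ≤ χ x := by
          have : eind (-(ε*Δ)) (ε*Δ) x = 1 := by rw [eind_def, if_pos hL]
          rw [hχ]; dsimp only; rw [this]; linarith [eind_nonneg ((1-ε)*Δ) ((1+ε)*Δ) x]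
        have h1 : Dn x ≤ |Up x - Dn x| + Up x := by
          have := neg_abs_le (Up x - Dn x); linarith
        have h2 : Fr * 1 ≤ Fr * χ x := mul_le_mul_of_nonneg_left hχ1 hFr0
        linarith
      · have hu0' : u x = 0 := hu0 hR
        have hv0' : v x = 0 := hv0 hL
        have := abs_nonneg (Up x - Dn x)
        nlinarith [mul_nonneg hFr0 hχ0]
  -- integrability
  have hInt_u : Integrable u := integrable_finset_sum _ (fun i _ => eind_integrable _ _)
  have hInt_v : Integrable v := integrable_finset_sum _ (fun i _ => eind_integrable _ _)
  have hInt_N : Integrable (fun x => Up x - Dn x) := by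
    have : (fun x => Up x - Dn x) =
        fun x => ∑ i, (eind (r i) (s (π i)) x - eind (s (π i)) (r i) x) := by
      funext x; rw [Finset.sum_sub_distrib]
    rw [this]
    exact integrable_finset_sum _ (fun i _ => (eind_integrable _ _).sub (eind_integrable _ _))
  have hInt_absN : Integrable (fun x => |Up x - Dn x|) := hInt_N.abs
  have hInt_χ : Integrable χ := (eind_integrable _ _).add (eind_integrable _ _)
  have hInt_rhs : Integrable (fun x => |Up x - Dn x| + Fr * χ x) :=
    hInt_absN.add (hInt_χ.const_mul Fr)
  -- the main integral inequality
  have hmain : (∫ x, u x) + (∫ x, v x) ≤ (∫ x, |Up x - Dn x|) + Fr * ∫ x, χ x := by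
    have h1 : ∫ x, (u x + v x) ≤ ∫ x, (|Up x - Dn x| + Fr * χ x) :=
      integral_mono (hInt_u.add hInt_v) hInt_rhs hkey
    rw [integral_add hInt_u hInt_v, integral_add hInt_absN (hInt_χ.const_mul Fr),
      MeasureTheory.integral_const_mul] at h1
    exact h1
  -- compute ∫ u and ∫ v
  have hu_int : ∫ x, u x = ∑ i ∈ CR, |s (π i) - r i| := by
    rw [hu, integral_finset_sum _ (fun i _ => eind_integrable _ _)]
    refine Finset.sum_congr rfl (fun i hi => ?_)
    rw [hCR, Finset.mem_filter] at hi
    have hal := (haligned i).1 hi.2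
    rw [eind_integral _ _ hal, abs_of_nonneg (by linarith)]
  have hv_int : ∫ x, v x = ∑ i ∈ CL, |s (π i) - r i| := by
    rw [hv, integral_finset_sum _ (fun i _ => eind_integrable _ _)]
    refine Finset.sum_congr rfl (fun i hi => ?_)
    rw [hCL, Finset.mem_filter] at hi
    have hal := (haligned i).2 hi.2
    rw [eind_integral _ _ hal, abs_of_nonpos (by linarith), neg_sub]
  -- compute ∫ χ
  have hχ_int : ∫ x, χ x = 4 * (ε * Δ) := by
    rw [hχ, integral_add (eind_integrable _ _) (eind_integrable _ _),
      eind_integral _ _ (by linarith), eind_integral _ _ (by nlinarith)]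
    ring
  -- ∫ |N| ≤ wopt
  have hNopt : (∫ x, |Up x - Dn x|) ≤ wopt := by
    rw [hwopt]
    refine le_ciInf (fun σ => ?_)
    have hptw : ∀ x, |Up x - Dn x| ≤
        ∑ i, eind (min (s (σ i)) (r i)) (max (s (σ i)) (r i)) x := by
      intro x
      have hNσ : Up x - Dn x =
          ∑ i, (eind (r i) (s (σ i)) x - eind (s (σ i)) (r i) x) := by
        rw [hUp, hDn]
        dsimp only
        rw [← Finset.sum_sub_distrib]
        have hπ : ∀ (τ : Equiv.Perm (Fin n)),
            ∑ i, (eind (r i) (s (τ i)) x - eind (s (τ i)) (r i) x) =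
            (∑ i, (if r i < x then (1:ℝ) else 0)) - ∑ i, (if s (τ i) < x then (1:ℝ) else 0) := by
          intro τ
          rw [← Finset.sum_sub_distrib]
          exact Finset.sum_congr rfl (fun i _ => eind_sub _ _ _)
        rw [hπ π, hπ σ,
          Equiv.sum_comp π (fun j => if s j < x then (1:ℝ) else 0),
          Equiv.sum_comp σ (fun j => if s j < x then (1:ℝ) else 0)]
      rw [hNσ]
      refine (Finset.abs_sum_le_sum_abs _ _).trans (Finset.sum_le_sum (fun i _ => ?_))
      have := eind_abs_sub (r i) (s (σ i)) x
      rwa [min_comm, max_comm] at this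
    have hintσ : ∫ x, ∑ i, eind (min (s (σ i)) (r i)) (max (s (σ i)) (r i)) x =
        ∑ i, |s (σ i) - r i| := by
      rw [integral_finset_sum _ (fun i _ => eind_integrable _ _)]
      refine Finset.sum_congr rfl (fun i _ => ?_)
      rw [eind_integral _ _ (min_le_max), max_sub_min_eq_abs, abs_sub_comm]
    calc (∫ x, |Up x - Dn x|)
        ≤ ∫ x, ∑ i, eind (min (s (σ i)) (r i)) (max (s (σ i)) (r i)) x :=
          integral_mono hInt_absN
            (integrable_finset_sum _ (fun i _ => eind_integrable _ _)) hptw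
      _ = ∑ i, |s (σ i) - r i| := hintσ
  -- Far bound
  have h2ε : (0:ℝ) < 1 - 2*ε := by linarith
  have hFarLB : Fr * ((1 - 2*ε) * Δ) ≤ ∑ i ∈ Far, |s (π i) - r i| := by
    rw [hFr, Finset.sum_mul, one_mul]
    refine Finset.sum_le_sum (fun i hi => ?_)
    rw [hFarDef, Finset.mem_filter] at hi
    rcases hi.2 with ⟨hsl, hrr⟩ | ⟨hsr, hrl⟩
    · calc (1 - 2*ε) * Δ ≤ r i - s (π i) := by nlinarith [hsl.2, hrr.1]
        _ ≤ |r i - s (π i)| := le_abs_self _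
        _ = |s (π i) - r i| := abs_sub_comm _ _
    · calc (1 - 2*ε) * Δ ≤ s (π i) - r i := by nlinarith [hsr.1, hrl.2]
        _ ≤ |s (π i) - r i| := le_abs_self _
  have hFarBound : Fr * (4 * (ε * Δ)) ≤
      (4 * ε / (1 - 2 * ε)) * ∑ i ∈ Far, |s (π i) - r i| := by
    have h := mul_le_mul_of_nonneg_left hFarLB
      (by positivity : (0:ℝ) ≤ 4 * ε / (1 - 2*ε))
    calc Fr * (4 * (ε * Δ)) = (4 * ε / (1 - 2*ε)) * (Fr * ((1 - 2*ε) * Δ)) := by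
          rw [div_mul_eq_mul_div, eq_div_iff h2ε.ne']; ring
      _ ≤ _ := h
  -- Medium bound
  have hMed1 : ∑ i ∈ Med, |s (π i) - r i| ≤ ∑ i ∈ Med, Δ := by
    refine Finset.sum_le_sum (fun i hi => ?_)
    rw [hMedDef, Finset.mem_filter] at hi
    obtain ⟨h1, h2⟩ := hi.2
    rcases hsep_s (π i) with hleft | hright
    · rw [abs_of_nonpos (by linarith)]; linarith
    · rw [abs_of_nonneg (by linarith)]
      have := hright.2
      linarith
  have hMed2 : ε * ∑ i ∈ Med, Δ ≤ wopt := by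
    rw [hwopt]
    refine le_ciInf (fun σ => ?_)
    calc ε * ∑ i ∈ Med, Δ = ∑ i ∈ Med, ε * Δ := by rw [Finset.mul_sum]
      _ ≤ ∑ i ∈ Med, |s (σ i) - r i| := by
          refine Finset.sum_le_sum (fun i hi => ?_)
          rw [hMedDef, Finset.mem_filter] at hi
          obtain ⟨h1, h2⟩ := hi.2
          rcases hsep_s (σ i) with hleft | hright
          · rw [abs_of_nonpos (by linarith)]; linarith
          · rw [abs_of_nonneg (by linarith)]; linarith [hright.1]
      _ ≤ ∑ i, |s (σ i) - r i| :=
          Finset.sum_le_sum_of_subset_of_nonneg (Finset.subset_univ _)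
            (fun i _ _ => abs_nonneg _)
  have hopt0 : 0 ≤ wopt := le_ciInf (fun σ => Finset.sum_nonneg (fun i _ => abs_nonneg _))
  -- assemble
  rw [hu_int, hv_int, hχ_int] at hmain
  have hMedΔ : ∑ i ∈ Med, |s (π i) - r i| ≤ (1/ε) * wopt := by
    have h' := mul_le_mul_of_nonneg_left hMed2 (le_of_lt (one_div_pos.mpr hε0))
    have he : (1/ε) * (ε * ∑ _i ∈ Med, Δ) = ∑ _i ∈ Med, Δ := by field_simp
    linarith [hMed1]
  have hexp : (2/ε + 3) * wopt = 2 * ((1/ε) * wopt) + 3 * wopt := by ring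
  have h1e : 0 ≤ (1/ε) * wopt := mul_nonneg (by positivity) hopt0
  linarith [hmain, hNopt, hFarBound, hMedΔ]
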